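/- Let B be a k×d random matrix with i.i.d. N(0,1) entries and set a = (k(k+d))^{−1/2}, P = a BᵀB. Then for every non-random u ∈ ℝᵈ with μ_u = 0 and every index m: E[(Pu)_m] = (k/(k+d))^{1/2} u_m and Var((Pu)_m) = (u_m² + (d−1)σ_u²)/(d+k). -/

import Mathlib

open MeasureTheory Real Filter

lemma integrable_pow_mul_gauss (n : ℕ) :
    Integrable (fun x : ℝ => x ^ n * Real.exp (-x^2/2)) := by
  have h4 : (0:ℝ) < 1/4 := by norm_num
  have h2 : (0:ℝ) < 1/2 := by norm_num
  have hdom : Integrable (fun x : ℝ =>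
      Real.exp (-(1/2) * x^2) + ((Nat.factorial n : ℝ) * 4 ^ n) * Real.exp (-(1/4) * x^2)) :=
    (integrable_exp_neg_mul_sq h2).add ((integrable_exp_neg_mul_sq h4).const_mul _)
  refine hdom.mono' ?_ ?_
  · exact ((continuous_pow n).mul (by continuity)).aestronglyMeasurable
  · refine Filter.Eventually.of_forall fun x => ?_
    have key : x ^ (2*n) * Real.exp (-x^2/2) ≤ ((Nat.factorial n : ℝ) * 4 ^ n) * Real.exp (-(1/4) * x^2) := by
      have h1 : (x^2/4) ^ n / Nat.factorial n ≤ Real.exp (x^2/4) :=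
        Real.pow_div_factorial_le_exp _ (by positivity) n
      have h2 : x ^ (2*n) ≤ (Nat.factorial n : ℝ) * 4 ^ n * Real.exp (x^2/4) := by
        have := (div_le_iff₀ (by positivity : (0:ℝ) < (Nat.factorial n : ℝ))).mp h1
        calc x ^ (2*n) = (x^2/4) ^ n * 4 ^ n := by
              rw [div_pow, pow_mul]; field_simp
          _ ≤ (Real.exp (x^2/4) * Nat.factorial n) * 4 ^ n := by
              gcongr

          _ = (Nat.factorial n : ℝ) * 4 ^ n * Real.exp (x^2/4) := by ring
      calc x ^ (2*n) * Real.exp (-x^2/2)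
          ≤ ((Nat.factorial n : ℝ) * 4 ^ n * Real.exp (x^2/4)) * Real.exp (-x^2/2) := by
            gcongr
        _ = ((Nat.factorial n : ℝ) * 4 ^ n) * Real.exp (-(1/4) * x^2) := by
            rw [mul_assoc, ← Real.exp_add]; ring_nf
    have habs : |x ^ n * Real.exp (-x^2/2)| = |x| ^ n * Real.exp (-x^2/2) := by
      rw [abs_mul, abs_pow, abs_of_pos (Real.exp_pos _)]
    rw [Real.norm_eq_abs, habs]
    have hxn : |x| ^ n ≤ 1 + x ^ (2*n) := by
      rcases le_total (|x|) 1 with h | h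
      · have : |x| ^ n ≤ 1 := pow_le_one₀ (abs_nonneg x) h
        have : (0:ℝ) ≤ x ^ (2*n) := (even_two_mul n).pow_nonneg x
        linarith
      · have : |x| ^ n ≤ |x| ^ (2*n) := pow_le_pow_right₀ h (by omega)
        have hx2 : |x| ^ (2*n) = x ^ (2*n) := by
          rw [pow_mul, pow_mul, sq_abs]
        nlinarith [this]
    calc |x| ^ n * Real.exp (-x^2/2) ≤ (1 + x ^ (2*n)) * Real.exp (-x^2/2) := by
          gcongr
      _ = Real.exp (-x^2/2) + x ^ (2*n) * Real.exp (-x^2/2) := by ring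
      _ ≤ Real.exp (-(1/2)*x^2) + ((Nat.factorial n : ℝ) * 4 ^ n) * Real.exp (-(1/4) * x^2) := by
          rw [show -(1/2)*x^2 = -x^2/2 by ring]
          linarith [key]


open MeasureTheory Real Filter Set

lemma integral_deriv_real_eq_zero (f g : ℝ → ℝ) (hder : ∀ x, HasDerivAt f (g x) x)
    (hint : Integrable g) (htop : Tendsto f atTop (nhds 0)) (hbot : Tendsto f atBot (nhds 0)) :
    ∫ x, g x = 0 := by
  have h1 : ∫ x in Set.Ioi (0:ℝ), g x = 0 - f 0 :=
    integral_Ioi_of_hasDerivAt_of_tendsto' (fun x _ => hder x) hint.integrableOn htop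
  have h2 : ∫ x in Set.Iic (0:ℝ), g x = f 0 - 0 :=
    integral_Iic_of_hasDerivAt_of_tendsto' (fun x _ => hder x) hint.integrableOn hbot
  rw [← intervalIntegral.integral_Iic_add_Ioi (b := (0:ℝ)) hint.integrableOn hint.integrableOn, h1, h2]
  ring

lemma gauss_tendsto_cocompact (n : ℕ) :
    Tendsto (fun x : ℝ => x ^ n * Real.exp (-x^2/2)) (Filter.cocompact ℝ) (nhds 0) := by
  have h := tendsto_rpow_abs_mul_exp_neg_mul_sq_cocompact (by norm_num : (0:ℝ) < 1/2) n
  rw [tendsto_zero_iff_norm_tendsto_zero]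
  have : (fun x : ℝ => ‖x ^ n * Real.exp (-x^2/2)‖)
      = fun x : ℝ => |x| ^ ((n : ℝ)) * Real.exp (-(1/2) * x^2) := by
    funext x
    rw [Real.norm_eq_abs, abs_mul, abs_pow, abs_of_pos (Real.exp_pos _), Real.rpow_natCast]
    ring_nf
  rw [this]
  exact h


open MeasureTheory Real Filter Set ProbabilityTheory




noncomputable def M (n : ℕ) : ℝ := ∫ x : ℝ, x ^ n * Real.exp (-x^2/2)

lemma gauss_tendsto_atTop (n : ℕ) :
    Tendsto (fun x : ℝ => x ^ n * Real.exp (-x^2/2)) atTop (nhds 0) :=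
  (gauss_tendsto_cocompact n).mono_left (by rw [cocompact_eq_atBot_atTop]; exact le_sup_right)

lemma gauss_tendsto_atBot (n : ℕ) :
    Tendsto (fun x : ℝ => x ^ n * Real.exp (-x^2/2)) atBot (nhds 0) :=
  (gauss_tendsto_cocompact n).mono_left (by rw [cocompact_eq_atBot_atTop]; exact le_sup_left)

lemma gauss_hasDerivAt (n : ℕ) (x : ℝ) :
    HasDerivAt (fun y : ℝ => -(y ^ (n+1) * Real.exp (-y^2/2)))
      (x ^ (n+2) * Real.exp (-x^2/2) - (n+1) * (x ^ n * Real.exp (-x^2/2))) x := by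
  have h1 : HasDerivAt (fun y : ℝ => -y^2/2) (-x) x := by
    have h : HasDerivAt (fun y : ℝ => -(y^2/2)) (-((2:ℕ) * x^(2-1)/2)) x := ((hasDerivAt_pow 2 x).div_const 2).fun_neg
    convert h using 1
    · funext y; ring
    · simp
  have hexp : HasDerivAt (fun y : ℝ => Real.exp (-y^2/2)) (Real.exp (-x^2/2) * (-x)) x :=
    h1.exp
  have hmul : HasDerivAt (fun y : ℝ => -(y ^ (n+1) * Real.exp (-y^2/2)))
      (-(((n+1 : ℕ) : ℝ) * x ^ (n+1-1) * Real.exp (-x^2/2) + x ^ (n+1) * (Real.exp (-x^2/2) * -x))) x :=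
    ((hasDerivAt_pow (n+1) x).fun_mul hexp).fun_neg
  convert hmul using 1
  simp only [Nat.add_sub_cancel]
  push_cast
  ring

lemma M_rec (n : ℕ) : M (n+2) = (n+1) * M n := by
  have hint : Integrable (fun x : ℝ =>
      x ^ (n+2) * Real.exp (-x^2/2) - (n+1) * (x ^ n * Real.exp (-x^2/2))) :=
    (integrable_pow_mul_gauss (n+2)).sub ((integrable_pow_mul_gauss n).const_mul _)
  have h0 := integral_deriv_real_eq_zero _ _ (gauss_hasDerivAt n)
    hint (by simpa using (gauss_tendsto_atTop (n+1)).neg)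
    (by simpa using (gauss_tendsto_atBot (n+1)).neg)
  rw [integral_sub (integrable_pow_mul_gauss (n+2))
    ((integrable_pow_mul_gauss n).const_mul _), integral_const_mul] at h0
  have : M (n+2) - (n+1) * M n = 0 := h0
  linarith

lemma M_zero : M 0 = Real.sqrt (2*π) := by
  have h := integral_gaussian (1/2)
  rw [show π / (1/2 : ℝ) = 2*π by ring] at h
  rw [M]
  simp only [pow_zero, one_mul]
  rw [← h]
  congr 1
  funext x
  ring_nf

lemma M_one : M 1 = 0 := by
  have hder : ∀ x : ℝ, HasDerivAt (fun y : ℝ => -Real.exp (-y^2/2))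
      (x ^ 1 * Real.exp (-x^2/2)) x := by
    intro x
    have h1 : HasDerivAt (fun y : ℝ => -y^2/2) (-x) x := by
      have h : HasDerivAt (fun y : ℝ => -(y^2/2)) (-((2:ℕ) * x^(2-1)/2)) x := ((hasDerivAt_pow 2 x).div_const 2).fun_neg
      convert h using 1
      · funext y; ring
      · simp
    have hexp : HasDerivAt (fun y : ℝ => Real.exp (-y^2/2)) (Real.exp (-x^2/2) * (-x)) x :=
      h1.exp
    have : HasDerivAt (fun y : ℝ => -Real.exp (-y^2/2)) (-(Real.exp (-x^2/2) * -x)) x := hexp.fun_neg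
    convert this using 1
    ring
  have htop : Tendsto (fun x : ℝ => -Real.exp (-x^2/2)) atTop (nhds 0) := by
    simpa using (gauss_tendsto_atTop 0).neg
  have hbot : Tendsto (fun x : ℝ => -Real.exp (-x^2/2)) atBot (nhds 0) := by
    simpa using (gauss_tendsto_atBot 0).neg
  exact integral_deriv_real_eq_zero _ _ hder (integrable_pow_mul_gauss 1) htop hbot

lemma M_two : M 2 = Real.sqrt (2*π) := by
  have := M_rec 0
  simp at this
  rw [this, M_zero]

lemma M_three : M 3 = 0 := by
  have := M_rec 1
  rw [this, M_one]; ring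

lemma M_four : M 4 = 3 * Real.sqrt (2*π) := by
  have := M_rec 2
  rw [this, M_two]; norm_num


open MeasureTheory Real Filter Set ProbabilityTheory
open scoped ENNReal NNReal



lemma gaussianPDFReal_zero_one (x : ℝ) :
    gaussianPDFReal 0 1 x = (Real.sqrt (2*π))⁻¹ * Real.exp (-x^2/2) := by
  rw [gaussianPDFReal]
  norm_num

lemma integral_pow_gaussianReal (n : ℕ) :
    ∫ x, x ^ n ∂(gaussianReal 0 1) = (Real.sqrt (2*π))⁻¹ * M n := by
  rw [gaussianReal_of_var_ne_zero 0 one_ne_zero]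
  have hmeas : Measurable fun x => (gaussianPDFReal 0 1 x).toNNReal :=
    (measurable_gaussianPDFReal 0 1).real_toNNReal
  rw [show gaussianPDF 0 1 = fun x => ((gaussianPDFReal 0 1 x).toNNReal : ℝ≥0∞) from rfl]
  rw [integral_withDensity_eq_integral_smul hmeas]
  simp only [NNReal.smul_def, smul_eq_mul]
  have : ∀ x : ℝ, ((Real.toNNReal (gaussianPDFReal 0 1 x)) : ℝ) * x ^ n
      = (Real.sqrt (2*π))⁻¹ * (x ^ n * Real.exp (-x^2/2)) := by
    intro x
    rw [Real.coe_toNNReal _ (gaussianPDFReal_nonneg 0 1 x), gaussianPDFReal_zero_one]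
    ring
  rw [MeasureTheory.integral_congr_ae (Filter.Eventually.of_forall this), integral_const_mul]
  rfl

lemma integrable_pow_gaussianReal (n : ℕ) :
    Integrable (fun x => x ^ n) (gaussianReal 0 1) := by
  rw [gaussianReal_of_var_ne_zero 0 one_ne_zero]
  have hmeas : Measurable fun x => (gaussianPDFReal 0 1 x).toNNReal :=
    (measurable_gaussianPDFReal 0 1).real_toNNReal
  rw [show gaussianPDF 0 1 = fun x => ((gaussianPDFReal 0 1 x).toNNReal : ℝ≥0∞) from rfl]
  rw [integrable_withDensity_iff_integrable_smul hmeas]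
  have : ∀ x : ℝ, (Real.toNNReal (gaussianPDFReal 0 1 x)) • (x ^ n)
      = (Real.sqrt (2*π))⁻¹ * (x ^ n * Real.exp (-x^2/2)) := by
    intro x
    rw [NNReal.smul_def, smul_eq_mul, Real.coe_toNNReal _ (gaussianPDFReal_nonneg 0 1 x),
      gaussianPDFReal_zero_one]
    ring
  rw [MeasureTheory.integrable_congr (Filter.Eventually.of_forall this)]
  exact (integrable_pow_mul_gauss n).const_mul _


section moments
open MeasureTheory Real ProbabilityTheory

lemma sqrt_two_pi_ne : Real.sqrt (2*π) ≠ 0 :=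
  ne_of_gt (Real.sqrt_pos.mpr (by positivity))

lemma gauss_moment_one {Ω : Type} [MeasureSpace Ω] [IsProbabilityMeasure (ℙ : Measure Ω)]
    {X : Ω → ℝ} (hm : Measurable X) (hg : Measure.map X ℙ = gaussianReal 0 1)
    (n : ℕ) : Integrable (fun ω => X ω ^ n) ℙ ∧
      (n = 1 → ∫ ω, X ω ^ n = 0) ∧ (n = 2 → ∫ ω, X ω ^ n = 1) ∧
      (n = 3 → ∫ ω, X ω ^ n = 0) ∧ (n = 4 → ∫ ω, X ω ^ n = 3) := by
  have hmeasn : Measurable fun x : ℝ => x ^ n := measurable_id.pow_const n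
  have hint : Integrable (fun ω => X ω ^ n) ℙ := by
    have h := integrable_pow_gaussianReal n
    rw [← hg] at h
    exact (integrable_map_measure hmeasn.aestronglyMeasurable hm.aemeasurable).mp h
  have hval : ∫ ω, X ω ^ n = (Real.sqrt (2*π))⁻¹ * M n := by
    rw [← integral_pow_gaussianReal, ← hg,
      integral_map hm.aemeasurable hmeasn.aestronglyMeasurable]
  refine ⟨hint, ?_, ?_, ?_, ?_⟩ <;> rintro rfl <;> rw [hval]
  · rw [M_one]; ring
  · rw [M_two, inv_mul_cancel₀ sqrt_two_pi_ne]
  · rw [M_three]; ring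
  · rw [M_four]
    field_simp
end moments


open MeasureTheory ProbabilityTheory BigOperators Matrix

noncomputable def sampleMean {d : ℕ} (x : Fin d → ℝ) : ℝ := (∑ m, x m) / d

noncomputable def sampleCov {d : ℕ} (x y : Fin d → ℝ) : ℝ :=
  (∑ m, (x m - sampleMean x) * (y m - sampleMean y)) / ((d : ℝ) - 1)

noncomputable def proj {k d : ℕ} (a : ℝ) (B : Matrix (Fin k) (Fin d) ℝ)
    (u : Fin d → ℝ) : Fin d → ℝ := a • (Bᵀ * B).mulVec u


theorem stmt10
    {Ω : Type} [MeasureSpace Ω] [IsProbabilityMeasure (ℙ : Measure Ω)]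
    {k d : ℕ} (hk : 1 ≤ k) (hd : 4 ≤ d)
    (B : Ω → Matrix (Fin k) (Fin d) ℝ)
    (hmeas : ∀ j m, Measurable fun ω => B ω j m)
    (hindep : iIndepFun
      (fun (p : Fin k × Fin d) ω => B ω p.1 p.2) ℙ)
    (hgauss : ∀ j m, Measure.map (fun ω => B ω j m) ℙ = gaussianReal 0 1)
    (u : Fin d → ℝ) (hu : sampleMean u = 0) (m : Fin d) :
    (∫ ω, proj (1 / Real.sqrt (k * (k + d))) (B ω) u m
        = Real.sqrt ((k : ℝ) / (k + d)) * u m)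
    ∧ variance (fun ω => proj (1 / Real.sqrt (k * (k + d))) (B ω) u m) ℙ
        = ((u m) ^ 2 + ((d : ℝ) - 1) * sampleCov u u) / ((d : ℝ) + k) := by
  classical
  set a : ℝ := 1 / Real.sqrt (k * (k + d)) with ha
  set X : Fin k × Fin d → Ω → ℝ := fun p ω => B ω p.1 p.2 with hXdef
  have hXm : ∀ p, Measurable (X p) := fun p => hmeas p.1 p.2
  -- moments
  have hmom := fun (p : Fin k × Fin d) (n : ℕ) =>
    gauss_moment_one (hXm p) (hgauss p.1 p.2) n
  have hXint : ∀ p n, Integrable (fun ω => X p ω ^ n) ℙ := fun p n => (hmom p n).1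
  have hXint1 : ∀ p, Integrable (X p) ℙ := by
    intro p; have := hXint p 1; simpa using this
  have hE1 : ∀ p, ∫ ω, X p ω = 0 := by
    intro p; have := (hmom p 1).2.1 rfl; simpa using this
  have hE2 : ∀ p, ∫ ω, X p ω ^ 2 = 1 := fun p => (hmom p 2).2.2.1 rfl
  have hE3 : ∀ p, ∫ ω, X p ω ^ 3 = 0 := fun p => (hmom p 3).2.2.2.1 rfl
  have hE4 : ∀ p, ∫ ω, X p ω ^ 4 = 3 := fun p => (hmom p 4).2.2.2.2 rfl
  -- independence helpers
  have hI2 : ∀ p q, p ≠ q → IndepFun (X p) (X q) ℙ := fun p q h => hindep.indepFun h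
  have hIpow : ∀ p q (n r : ℕ), p ≠ q →
      IndepFun (fun ω => X p ω ^ n) (fun ω => X q ω ^ r) ℙ := by
    intro p q n r h
    exact (hI2 p q h).comp (measurable_id.pow_const n) (measurable_id.pow_const r)
  have hprodint : ∀ p q (n r : ℕ), p ≠ q →
      Integrable (fun ω => X p ω ^ n * X q ω ^ r) ℙ := by
    intro p q n r h
    exact (hIpow p q n r h).integrable_mul (hXint p n) (hXint q r)
  have hprodval : ∀ p q (n r : ℕ), p ≠ q →
      ∫ ω, X p ω ^ n * X q ω ^ r = (∫ ω, X p ω ^ n) * ∫ ω, X q ω ^ r := by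
    intro p q n r h
    exact (hIpow p q n r h).integral_fun_mul_eq_mul_integral (hXint p n).aestronglyMeasurable
      (hXint q r).aestronglyMeasurable
  -- three distinct indices
  have hI3 : ∀ p q r (n : ℕ), q ≠ p → r ≠ p →
      IndepFun (fun ω => X p ω ^ n) (fun ω => X q ω * X r ω) ℙ := by
    intro p q r n hq hr
    have h := (hindep.indepFun_prodMk hXm q r p hq hr).symm
    exact h.comp (measurable_id.pow_const n) (measurable_fst.mul measurable_snd)
  have h3int : ∀ p q r (n : ℕ), q ≠ p → r ≠ p → q ≠ r →
      Integrable (fun ω => X p ω ^ n * (X q ω * X r ω)) ℙ := by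
    intro p q r n hq hr hqr
    refine (hI3 p q r n hq hr).integrable_mul (hXint p n) ?_
    have := hprodint q r 1 1 hqr
    simpa using this
  have h3val : ∀ p q r (n : ℕ), q ≠ p → r ≠ p → q ≠ r →
      ∫ ω, X p ω ^ n * (X q ω * X r ω) = 0 := by
    intro p q r n hq hr hqr
    have hmul : ∫ ω, X q ω * X r ω = 0 := by
      have := hprodval q r 1 1 hqr
      simp only [pow_one] at this
      rw [this, hE1 q, hE1 r]; ring
    rw [(hI3 p q r n hq hr).integral_fun_mul_eq_mul_integral (hXint p n).aestronglyMeasurable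
      ((hI2 q r hqr).integrable_mul (hXint1 q) (hXint1 r)).aestronglyMeasurable, hmul, mul_zero]
  -- row functions
  set F : Fin k → Fin d → Ω → ℝ := fun j l ω => u l * (X (j, m) ω * X (j, l) ω) with hFdef
  set T : Fin k → Ω → ℝ := fun j ω => ∑ l, F j l ω with hTdef
  have hne : ∀ (j : Fin k) (l₁ l₂ : Fin d), l₁ ≠ l₂ → ((j, l₁) : Fin k × Fin d) ≠ (j, l₂) := by
    intro j l₁ l₂ h hc; exact h (congrArg Prod.snd hc)
  -- single F integrability and mean
  have hFint : ∀ j l, Integrable (F j l) ℙ := by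
    intro j l
    by_cases hlm : l = m
    · subst hlm
      have hfe : F j l = fun ω => u l * X (j, l) ω ^ 2 := funext fun ω => by
        simp only [hFdef]; ring
      rw [hfe]; exact (hXint (j, l) 2).const_mul _
    · have hfe : F j l = fun ω => u l * (X (j, m) ω ^ 1 * X (j, l) ω ^ 1) :=
        funext fun ω => by simp only [hFdef]; ring
      rw [hfe]
      exact (hprodint (j, m) (j, l) 1 1 (hne j m l (Ne.symm hlm))).const_mul _
  have hFval : ∀ j l, ∫ ω, F j l ω = u l * (if l = m then 1 else 0) := by
    intro j l
    by_cases hlm : l = m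
    · subst hlm
      have hfe : F j l = fun ω => u l * X (j, l) ω ^ 2 := funext fun ω => by
        simp only [hFdef]; ring
      rw [hfe, integral_const_mul, hE2, if_pos rfl]
    · have hfe : F j l = fun ω => u l * (X (j, m) ω ^ 1 * X (j, l) ω ^ 1) :=
        funext fun ω => by simp only [hFdef]; ring
      rw [hfe, integral_const_mul, hprodval (j, m) (j, l) 1 1 (hne j m l (Ne.symm hlm))]
      simp only [pow_one, hE1, mul_zero, zero_mul, if_neg hlm]
  -- products of two F's
  have hG : ∀ (j : Fin k) (l l' : Fin d),
      Integrable (fun ω => F j l ω * F j l' ω) ℙ ∧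
      ∫ ω, F j l ω * F j l' ω
        = u l * u l' * (if l = l' then (if l = m then 3 else 1) else 0) := by
    intro j l l'
    by_cases hll : l = l'
    · subst hll
      by_cases hlm : l = m
      · subst hlm
        have hfe : (fun ω => F j l ω * F j l ω) = fun ω => u l * u l * X (j, l) ω ^ 4 :=
          funext fun ω => by simp only [hFdef]; ring
        refine ⟨by rw [hfe]; exact (hXint (j, l) 4).const_mul _, ?_⟩
        rw [hfe, integral_const_mul, hE4]
        simp
      · have hfe : (fun ω => F j l ω * F j l ω)
            = fun ω => u l * u l * (X (j, m) ω ^ 2 * X (j, l) ω ^ 2) :=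
          funext fun ω => by simp only [hFdef]; ring
        have hpq := hne j m l (Ne.symm hlm)
        refine ⟨by rw [hfe]; exact (hprodint _ _ 2 2 hpq).const_mul _, ?_⟩
        rw [hfe, integral_const_mul, hprodval _ _ 2 2 hpq, hE2, hE2]
        simp [hlm]
    · -- l ≠ l'
      have hval0 : Integrable (fun ω => F j l ω * F j l' ω) ℙ ∧
          ∫ ω, F j l ω * F j l' ω = 0 := by
        by_cases hlm : l = m
        · subst hlm
          have hfe : (fun ω => F j l ω * F j l' ω)
              = fun ω => u l * u l' * (X (j, l) ω ^ 3 * X (j, l') ω ^ 1) :=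
            funext fun ω => by simp only [hFdef]; ring
          have hpq := hne j l l' hll
          refine ⟨by rw [hfe]; exact (hprodint _ _ 3 1 hpq).const_mul _, ?_⟩
          rw [hfe, integral_const_mul, hprodval _ _ 3 1 hpq, hE3]
          simp
        · by_cases hl'm : l' = m
          · subst hl'm
            have hfe : (fun ω => F j l ω * F j l' ω)
                = fun ω => u l * u l' * (X (j, l') ω ^ 3 * X (j, l) ω ^ 1) :=
              funext fun ω => by simp only [hFdef]; ring
            have hpq := hne j l' l (Ne.symm hll)
            refine ⟨by rw [hfe]; exact (hprodint _ _ 3 1 hpq).const_mul _, ?_⟩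
            rw [hfe, integral_const_mul, hprodval _ _ 3 1 hpq, hE3]
            simp
          · have hfe : (fun ω => F j l ω * F j l' ω)
                = fun ω => u l * u l' * (X (j, m) ω ^ 2 * (X (j, l) ω * X (j, l') ω)) :=
              funext fun ω => by simp only [hFdef]; ring
            have hq := hne j l m hlm
            have hr := hne j l' m hl'm
            have hqr := hne j l l' hll
            refine ⟨by rw [hfe]; exact (h3int _ _ _ 2 hq hr hqr).const_mul _, ?_⟩
            rw [hfe, integral_const_mul, h3val _ _ _ 2 hq hr hqr]
            simp
      exact ⟨hval0.1, by rw [hval0.2, if_neg hll, mul_zero]⟩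
  -- mean and second moment of T
  have hET : ∀ j, ∫ ω, T j ω = u m := by
    intro j
    rw [hTdef]
    rw [integral_finset_sum _ (fun l _ => hFint j l)]
    rw [Finset.sum_congr rfl (fun l _ => hFval j l)]
    simp [Finset.sum_ite_eq', mul_ite]
  have hET2 : ∀ j, ∫ ω, T j ω ^ 2 = 2 * u m ^ 2 + ∑ l, u l ^ 2 := by
    intro j
    have hsq : (fun ω => T j ω ^ 2) = fun ω => ∑ l, ∑ l', F j l ω * F j l' ω := by
      funext ω
      rw [hTdef]
      simp only [sq]
      rw [Finset.sum_mul_sum]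
    rw [hsq]
    rw [integral_finset_sum _ (fun l _ => integrable_finset_sum _ (fun l' _ => (hG j l l').1))]
    have : ∀ l : Fin d, l ∈ Finset.univ → (∫ ω, ∑ l', F j l ω * F j l' ω)
        = u l ^ 2 * (if l = m then 3 else 1) := by
      intro l _
      rw [integral_finset_sum _ (fun l' _ => (hG j l l').1)]
      rw [Finset.sum_congr rfl (fun l' _ => (hG j l l').2)]
      rw [Finset.sum_eq_single l]
      · simp [sq]
      · intro b _ hb
        simp [Ne.symm hb]
      · simp
    rw [Finset.sum_congr rfl this]
    have hterm : ∀ l : Fin d, u l ^ 2 * (if l = m then 3 else 1)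
        = u l ^ 2 + (if l = m then 2 * u l ^ 2 else 0) := by
      intro l; split <;> ring
    rw [Finset.sum_congr rfl (fun l _ => hterm l), Finset.sum_add_distrib]
    simp [Finset.sum_ite_eq', mul_ite]
    ring
  -- MemLp and independence of rows
  have hFmeas : ∀ j l, Measurable (F j l) := fun j l =>
    ((hXm (j, m)).mul (hXm (j, l))).const_mul _
  have hFmem : ∀ j l, MemLp (F j l) 2 ℙ := by
    intro j l
    rw [memLp_two_iff_integrable_sq (hFmeas j l).aestronglyMeasurable]
    have : (fun ω => F j l ω ^ 2) = fun ω => F j l ω * F j l ω :=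
      funext fun ω => by ring
    rw [this]; exact (hG j l l).1
  have hTmem : ∀ j, MemLp (T j) 2 ℙ := by
    intro j; rw [hTdef]; exact memLp_finset_sum _ (fun l _ => hFmem j l)
  have hTint : ∀ j, Integrable (T j) ℙ := fun j => (hTmem j).integrable one_le_two
  have hTindep : ∀ j j' : Fin k, j ≠ j' → IndepFun (T j) (T j') ℙ := by
    intro j j' hjj
    have hdisj : Disjoint (({j} : Finset (Fin k)) ×ˢ (Finset.univ : Finset (Fin d)))
        (({j'} : Finset (Fin k)) ×ˢ Finset.univ) := by
      rw [Finset.disjoint_left]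
      intro p hp hp'
      simp only [Finset.mem_product, Finset.mem_singleton] at hp hp'
      exact hjj (hp.1 ▸ hp'.1 ▸ rfl)
    have h := hindep.indepFun_finset _ _ hdisj hXm
    have hmem : ∀ (jj : Fin k) (l : Fin d),
        ((jj, l) : Fin k × Fin d) ∈ (({jj} : Finset (Fin k)) ×ˢ (Finset.univ : Finset (Fin d))) := by
      intro jj l; simp
    have hφ : ∀ jj : Fin k, Measurable (fun v : ((({jj} : Finset (Fin k)) ×ˢ (Finset.univ : Finset (Fin d)) : Finset (Fin k × Fin d)) → ℝ) =>
        ∑ l, u l * (v ⟨(jj, m), hmem jj m⟩ * v ⟨(jj, l), hmem jj l⟩)) := by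
      intro jj
      apply Finset.measurable_sum
      intro l _
      fun_prop
    exact h.comp (hφ j) (hφ j')
  -- pointwise formula for proj
  have hYfun : (fun ω => proj a (B ω) u m) = fun ω => a * ∑ j, T j ω := by
    funext ω
    have h1 : proj a (B ω) u m = a * ∑ l, (∑ j, B ω j m * B ω j l) * u l := by
      simp [proj, Matrix.mulVec, dotProduct, Matrix.mul_apply, Matrix.transpose_apply]
    rw [h1]
    congr 1
    have h2 : ∀ l : Fin d, (∑ j, B ω j m * B ω j l) * u l
        = ∑ j, u l * (B ω j m * B ω j l) := by
      intro l; rw [Finset.sum_mul]; exact Finset.sum_congr rfl fun j _ => by ring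
    rw [Finset.sum_congr rfl (fun l _ => h2 l), Finset.sum_comm]
  -- positivity facts
  have hk0 : (0:ℝ) < k := by exact_mod_cast hk
  have hd0 : (0:ℝ) < d := by exact_mod_cast Nat.lt_of_lt_of_le (by norm_num) hd
  have hkd0 : (0:ℝ) < (k:ℝ) * ((k:ℝ) + d) := by positivity
  have hs0 : 0 < Real.sqrt ((k:ℝ) * ((k:ℝ) + d)) := Real.sqrt_pos.mpr hkd0
  have hvarT : ∀ j, variance (T j) ℙ = u m ^ 2 + ∑ l, u l ^ 2 := by
    intro j
    rw [variance_eq_sub (hTmem j)]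
    have e2 : (T j ^ 2 : Ω → ℝ) = fun ω => T j ω ^ 2 := rfl
    rw [e2, hET2 j, hET j]
    ring
  constructor
  · -- mean
    rw [integral_congr_ae (Filter.Eventually.of_forall (fun ω => congrFun hYfun ω))]
    rw [integral_const_mul, integral_finset_sum _ (fun j _ => hTint j)]
    rw [Finset.sum_congr rfl (fun j _ => hET j)]
    rw [Finset.sum_const, Finset.card_univ, Fintype.card_fin, nsmul_eq_mul]
    have h1 : Real.sqrt ((k:ℝ)/((k:ℝ)+d)) = Real.sqrt (k:ℝ) / Real.sqrt ((k:ℝ)+d) :=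
      Real.sqrt_div hk0.le _
    have h2 : Real.sqrt ((k:ℝ) * ((k:ℝ)+d)) = Real.sqrt (k:ℝ) * Real.sqrt ((k:ℝ)+d) :=
      Real.sqrt_mul hk0.le _
    have h3 : Real.sqrt (k:ℝ) * Real.sqrt (k:ℝ) = (k:ℝ) := Real.mul_self_sqrt hk0.le
    have hks : (0:ℝ) < Real.sqrt (k:ℝ) := Real.sqrt_pos.mpr hk0
    have hkds : (0:ℝ) < Real.sqrt ((k:ℝ)+d) := Real.sqrt_pos.mpr (by positivity)
    rw [ha, h1, h2]
    field_simp
    linear_combination (-(u m)) * h3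
  · -- variance
    rw [hYfun, variance_const_mul]
    have hfs : (fun ω => ∑ j, T j ω) = ∑ j, T j := by
      funext ω; simp
    rw [hfs, IndepFun.variance_sum (fun j _ => hTmem j)
      (fun i _ j hj hij => hTindep i j hij)]
    rw [Finset.sum_congr rfl (fun j _ => hvarT j)]
    rw [Finset.sum_const, Finset.card_univ, Fintype.card_fin, nsmul_eq_mul]
    have hd1 : (0:ℝ) < (d:ℝ) - 1 := by
      have : (4:ℝ) ≤ (d:ℝ) := by exact_mod_cast hd
      linarith
    have hcov : ((d:ℝ)-1) * sampleCov u u = ∑ l, u l ^ 2 := by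
      rw [sampleCov, hu, mul_comm, div_mul_cancel₀ _ (ne_of_gt hd1)]
      exact Finset.sum_congr rfl fun l _ => by ring
    rw [hcov]
    have ha2 : a^2 = 1/((k:ℝ)*((k:ℝ)+d)) := by
      rw [ha, div_pow, one_pow, Real.sq_sqrt hkd0.le]
    rw [ha2]
    have hdk : (0:ℝ) < (d:ℝ) + k := by positivity
    field_simp
    ring
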